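/- If X ~ ESBIII(c,k,ε) and r is a natural number with c > r, then E(X^r) = (k/2) B(1 - r/c, r/c + k) [(1+ε)^{r+1} + (-1)^r (1-ε)^{r+1}]. -/

import Mathlib

open Real MeasureTheory Set

section BetaAux

lemma complex_integrand_eq {a b x : ℝ} (hx0 : 0 ≤ x) (hx1 : x ≤ 1) :
    (x:ℂ) ^ ((a:ℂ)-1) * (1-(x:ℂ)) ^ ((b:ℂ)-1)
      = ((x ^ (a-1) * (1-x) ^ (b-1) : ℝ) : ℂ) := by
  rw [Complex.ofReal_mul, Complex.ofReal_cpow hx0,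
    Complex.ofReal_cpow (by linarith : (0:ℝ) ≤ 1 - x)]
  push_cast
  ring

lemma beta_Ioo {a b : ℝ} (ha : 0 < a) (hb : 0 < b) :
    ∫ x in Ioo (0:ℝ) 1, x ^ (a-1) * (1-x) ^ (b-1)
      = Real.Gamma a * Real.Gamma b / Real.Gamma (a+b) := by
  have h := Complex.Gamma_mul_Gamma_eq_betaIntegral (s := (a:ℂ)) (t := (b:ℂ))
    (by simpa using ha) (by simpa using hb)
  have key : Complex.betaIntegral a b
      = ((∫ x in Ioo (0:ℝ) 1, x ^ (a-1) * (1-x) ^ (b-1) : ℝ) : ℂ) := by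
    rw [Complex.betaIntegral, intervalIntegral.integral_of_le zero_le_one,
      MeasureTheory.integral_Ioc_eq_integral_Ioo,
      setIntegral_congr_fun measurableSet_Ioo
        (fun x hx => complex_integrand_eq hx.1.le hx.2.le)]
    exact integral_ofReal
  rw [key, ← Complex.ofReal_add, Complex.Gamma_ofReal, Complex.Gamma_ofReal,
    Complex.Gamma_ofReal, ← Complex.ofReal_mul, ← Complex.ofReal_mul] at h
  have h' := Complex.ofReal_inj.mp h
  have hG : Real.Gamma (a+b) ≠ 0 := (Real.Gamma_pos_of_pos (by linarith)).ne'
  field_simp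
  linarith [h']

lemma beta_Ioo_integrable {a b : ℝ} (ha : 0 < a) (hb : 0 < b) :
    IntegrableOn (fun x : ℝ => x ^ (a-1) * (1-x) ^ (b-1)) (Ioo (0:ℝ) 1) := by
  have h := Complex.betaIntegral_convergent (u := (a:ℂ)) (v := (b:ℂ))
    (by simpa using ha) (by simpa using hb)
  have h2 : IntegrableOn (fun x : ℝ => (x:ℂ) ^ ((a:ℂ)-1) * (1-(x:ℂ)) ^ ((b:ℂ)-1))
      (Ioo (0:ℝ) 1) :=
    ((intervalIntegrable_iff_integrableOn_Ioc_of_le zero_le_one).mp h).mono_set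
      Ioo_subset_Ioc_self
  refine IntegrableOn.congr_fun (h2.re) (fun x hx => ?_) measurableSet_Ioo
  rw [complex_integrand_eq hx.1.le hx.2.le]
  simp

noncomputable def φ01 (x : ℝ) : ℝ := x / (1 - x)

lemma φ01_image : φ01 '' Ioo (0:ℝ) 1 = Ioi (0:ℝ) := by
  ext t
  constructor
  · rintro ⟨x, hx, rfl⟩
    exact div_pos hx.1 (by linarith [hx.2])
  · intro ht
    have ht' := mem_Ioi.mp ht
    have h1t : (1:ℝ) + t ≠ 0 := by linarith
    refine ⟨t / (1 + t), ⟨div_pos ht' (by linarith), ?_⟩, ?_⟩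
    · rw [div_lt_one (by linarith)]; linarith
    · have h2 : 1 - t/(1+t) = (1+t)⁻¹ := by field_simp; ring
      show t / (1+t) / (1 - t/(1+t)) = t
      rw [h2]; field_simp

lemma φ01_inj : InjOn φ01 (Ioo (0:ℝ) 1) := by
  have : StrictMonoOn φ01 (Ioo (0:ℝ) 1) := by
    intro x hx y hy hxy
    unfold φ01
    rw [div_lt_div_iff₀ (by linarith [hx.2]) (by linarith [hy.2])]
    nlinarith
  exact this.injOn

lemma φ01_deriv : ∀ x ∈ Ioo (0:ℝ) 1,
    HasDerivWithinAt φ01 (((1-x)^2)⁻¹) (Ioo (0:ℝ) 1) x := by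
  intro x hx
  have h1x : (1:ℝ) - x ≠ 0 := by intro h; simp [sub_eq_zero] at h; linarith [hx.2]
  have hd := (hasDerivAt_id x).div ((hasDerivAt_const x 1).sub (hasDerivAt_id x)) h1x
  simp only [id_eq] at hd
  have e : (1 * (1 - x) - x * (0 - 1)) / (1 - x) ^ 2 = ((1-x)^2)⁻¹ := by
    field_simp; ring
  simp only [Pi.sub_apply, id_eq] at hd
  rw [e] at hd
  exact hd.hasDerivWithinAt

lemma abs_smul_eq {a b : ℝ} :
    ∀ x ∈ Ioo (0:ℝ) 1, |((1-x)^2)⁻¹| • (φ01 x ^ (a-1) * (1 + φ01 x) ^ (-(a+b)))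
      = x ^ (a-1) * (1-x) ^ (b-1) := by
  intro x hx
  have hx1 : (0:ℝ) < 1 - x := by linarith [hx.2]
  have h1φ : 1 + φ01 x = (1-x)⁻¹ := by unfold φ01; field_simp; ring
  have hφ : φ01 x = x * (1-x)⁻¹ := by unfold φ01; ring
  have e2 : ((1-x)^2)⁻¹ = (1-x) ^ (-2 : ℝ) := by
    rw [← Real.rpow_natCast (1-x) 2, ← Real.rpow_neg hx1.le]; norm_num
  rw [smul_eq_mul, abs_of_pos (by positivity), e2, h1φ, hφ,
    Real.mul_rpow hx.1.le (inv_nonneg.mpr hx1.le),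
    Real.inv_rpow hx1.le, ← Real.rpow_neg hx1.le,
    Real.inv_rpow hx1.le, ← Real.rpow_neg hx1.le]
  have e3 : (1-x)^(-2:ℝ) * (x ^ (a-1) * (1-x)^(-(a-1)) * (1-x)^(-(-(a+b))))
      = x^(a-1) * ((1-x)^(-2:ℝ) * ((1-x)^(-(a-1)) * (1-x)^(-(-(a+b))))) := by ring
  rw [e3, ← Real.rpow_add hx1, ← Real.rpow_add hx1]
  congr 1
  ring

lemma beta_Ioi_eq {a b : ℝ} (ha : 0 < a) (hb : 0 < b) :
    (∫ t in Ioi (0:ℝ), t ^ (a-1) * (1+t) ^ (-(a+b)))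
      = Real.Gamma a * Real.Gamma b / Real.Gamma (a+b) := by
  rw [← φ01_image,
    integral_image_eq_integral_abs_deriv_smul measurableSet_Ioo φ01_deriv φ01_inj,
    setIntegral_congr_fun measurableSet_Ioo abs_smul_eq]
  exact beta_Ioo ha hb

lemma beta_Ioi_integrable {a b : ℝ} (ha : 0 < a) (hb : 0 < b) :
    IntegrableOn (fun t : ℝ => t ^ (a-1) * (1+t) ^ (-(a+b))) (Ioi (0:ℝ)) := by
  have h := (integrableOn_image_iff_integrableOn_abs_deriv_smul measurableSet_Ioo
    φ01_deriv φ01_inj (fun t : ℝ => t ^ (a-1) * (1+t) ^ (-(a+b))))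
  rw [φ01_image] at h
  rw [h]
  exact IntegrableOn.congr_fun (beta_Ioo_integrable ha hb)
    (fun x hx => (abs_smul_eq x hx).symm) measurableSet_Ioo

noncomputable def ψm (c s : ℝ) (t : ℝ) : ℝ := s * t ^ (-c⁻¹)

lemma ψm_image {c s : ℝ} (hc : 0 < c) (hs : 0 < s) :
    ψm c s '' Ioi (0:ℝ) = Ioi (0:ℝ) := by
  ext x
  constructor
  · rintro ⟨t, ht, rfl⟩
    exact mul_pos hs (Real.rpow_pos_of_pos ht _)
  · intro hx
    have hx' := mem_Ioi.mp hx
    refine ⟨(x / s) ^ (-c), Real.rpow_pos_of_pos (div_pos hx' hs) _, ?_⟩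
    show s * ((x/s) ^ (-c)) ^ (-c⁻¹) = x
    rw [← Real.rpow_mul (div_pos hx' hs).le]
    rw [show (-c) * (-c⁻¹) = 1 by field_simp, Real.rpow_one, mul_div_cancel₀ _ hs.ne']

lemma ψm_inj {c s : ℝ} (hc : 0 < c) (hs : 0 < s) : InjOn (ψm c s) (Ioi (0:ℝ)) := by
  have : StrictAntiOn (ψm c s) (Ioi (0:ℝ)) := by
    intro x hx y hy hxy
    exact mul_lt_mul_of_pos_left
      (Real.rpow_lt_rpow_of_neg (mem_Ioi.mp hx) hxy (by simp [hc])) hs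
  exact this.injOn

lemma ψm_deriv {c s : ℝ} : ∀ t ∈ Ioi (0:ℝ),
    HasDerivWithinAt (ψm c s) (s * (-c⁻¹ * t ^ (-c⁻¹ - 1))) (Ioi (0:ℝ)) t := by
  intro t ht
  exact ((Real.hasDerivAt_rpow_const (Or.inl (mem_Ioi.mp ht).ne')).const_mul
    s).hasDerivWithinAt

/-- Pointwise identity for the substitution on the positive half. -/
lemma ψm_pointwise {c k s : ℝ} {r : ℕ} (hc : 0 < c) (hs : 0 < s) :
    ∀ t ∈ Ioi (0:ℝ),
      |s * (-c⁻¹ * t ^ (-c⁻¹ - 1))| •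
        (ψm c s t ^ r * (c * k / 2 * (ψm c s t / s) ^ (-(c+1)) *
          (1 + (ψm c s t / s) ^ (-c)) ^ (-(k+1))))
      = s ^ (r+1) * (k/2) *
          (t ^ ((1 - (r:ℝ)/c) - 1) * (1+t) ^ (-((1 - (r:ℝ)/c) + ((r:ℝ)/c + k)))) := by
  intro t ht
  have ht' := mem_Ioi.mp ht
  have hdiv : ψm c s t / s = t ^ (-c⁻¹) := by
    unfold ψm; rw [mul_div_cancel_left₀ _ hs.ne']
  have habs : |s * (-c⁻¹ * t ^ (-c⁻¹ - 1))| = s * c⁻¹ * t ^ (-c⁻¹ - 1) := by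
    rw [abs_mul, abs_mul, abs_of_pos hs, abs_of_pos (Real.rpow_pos_of_pos ht' _),
      abs_neg, abs_of_pos (by positivity : (0:ℝ) < c⁻¹)]
    ring
  have hpow1 : (t ^ (-c⁻¹) : ℝ) ^ (-(c+1)) = t ^ (c⁻¹ + 1) := by
    rw [← Real.rpow_mul ht'.le]
    congr 1
    field_simp
    ring
  have hpow2 : (t ^ (-c⁻¹) : ℝ) ^ (-c) = t := by
    rw [← Real.rpow_mul ht'.le, show (-c⁻¹) * (-c) = 1 by field_simp, Real.rpow_one]
  have hpowr : (ψm c s t) ^ r = s ^ r * t ^ (-(↑r/c) : ℝ) := by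
    unfold ψm
    rw [mul_pow, ← Real.rpow_natCast (t ^ (-c⁻¹)) r, ← Real.rpow_mul ht'.le]
    congr 2
    field_simp
  rw [smul_eq_mul, habs, hdiv, hpow1, hpow2, hpowr]
  have hexp : -((1 - (r:ℝ)/c) + ((r:ℝ)/c + k)) = -(k+1) := by ring
  rw [hexp]
  have e : s * c⁻¹ * t ^ (-c⁻¹ - 1) * (s ^ r * t ^ (-(↑r/c) : ℝ) *
      (c * k / 2 * t ^ (c⁻¹ + 1) * (1+t) ^ (-(k+1))))
      = (s * s ^ r * (c⁻¹ * c) * (k/2)) *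
        (t ^ (-c⁻¹ - 1) * t ^ (-(↑r/c) : ℝ) * t ^ (c⁻¹ + 1)) * (1+t) ^ (-(k+1)) := by
    ring
  rw [e, ← Real.rpow_add ht', ← Real.rpow_add ht', inv_mul_cancel₀ hc.ne']
  rw [show s * s ^ r * 1 = s ^ (r+1) by rw [pow_succ]; ring]
  rw [show -c⁻¹ - 1 + -(↑r/c) + (c⁻¹ + 1) = (1 - (r:ℝ)/c) - 1 by ring]
  ring

lemma ha_pos {c : ℝ} {r : ℕ} (hc : 0 < c) (hrc : (r:ℝ) < c) : 0 < 1 - (r:ℝ)/c := by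
  have : (r:ℝ)/c < 1 := (div_lt_one hc).mpr hrc
  linarith

lemma half_eq {c k s : ℝ} {r : ℕ} (hc : 0 < c) (hk : 0 < k) (hs : 0 < s)
    (hrc : (r:ℝ) < c) :
    (∫ x in Ioi (0:ℝ), x ^ r * (c * k / 2 * (x/s) ^ (-(c+1)) *
        (1 + (x/s) ^ (-c)) ^ (-(k+1))))
      = s ^ (r+1) * (k/2) *
        (Real.Gamma (1 - (r:ℝ)/c) * Real.Gamma ((r:ℝ)/c + k) /
          Real.Gamma ((1 - (r:ℝ)/c) + ((r:ℝ)/c + k))) := by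
  have ha : 0 < 1 - (r:ℝ)/c := ha_pos hc hrc
  have hb : 0 < (r:ℝ)/c + k := by positivity
  rw [← ψm_image hc hs,
    integral_image_eq_integral_abs_deriv_smul measurableSet_Ioi ψm_deriv (ψm_inj hc hs),
    setIntegral_congr_fun measurableSet_Ioi (ψm_pointwise hc hs),
    MeasureTheory.integral_const_mul, beta_Ioi_eq ha hb]

lemma half_integrable {c k s : ℝ} {r : ℕ} (hc : 0 < c) (hk : 0 < k) (hs : 0 < s)
    (hrc : (r:ℝ) < c) :
    IntegrableOn (fun x : ℝ => x ^ r * (c * k / 2 * (x/s) ^ (-(c+1)) *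
        (1 + (x/s) ^ (-c)) ^ (-(k+1)))) (Ioi (0:ℝ)) := by
  have ha : 0 < 1 - (r:ℝ)/c := ha_pos hc hrc
  have hb : 0 < (r:ℝ)/c + k := by positivity
  have h := integrableOn_image_iff_integrableOn_abs_deriv_smul measurableSet_Ioi
    ψm_deriv (ψm_inj hc hs) (fun x : ℝ => x ^ r * (c * k / 2 * (x/s) ^ (-(c+1)) *
      (1 + (x/s) ^ (-c)) ^ (-(k+1))))
  rw [ψm_image hc hs] at h
  rw [h]
  exact IntegrableOn.congr_fun
    (Integrable.const_mul (beta_Ioi_integrable ha hb) (s ^ (r+1) * (k/2)))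
    (fun t ht => (ψm_pointwise hc hs t ht).symm) measurableSet_Ioi

lemma neg_image : Neg.neg '' Ioi (0:ℝ) = Iio (0:ℝ) := by
  ext x
  simp only [mem_image, mem_Ioi, mem_Iio]
  constructor
  · rintro ⟨t, ht, rfl⟩; linarith
  · intro hx; exact ⟨-x, by linarith, by ring⟩

lemma neg_deriv : ∀ x ∈ Ioi (0:ℝ),
    HasDerivWithinAt (Neg.neg : ℝ → ℝ) (-1) (Ioi (0:ℝ)) x := fun x _ =>
  (hasDerivAt_neg x).hasDerivWithinAt

lemma negg_inj : InjOn (Neg.neg : ℝ → ℝ) (Ioi (0:ℝ)) := fun _ _ _ _ h => neg_injective h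

end BetaAux

/-- sign function with sign(0) = 1, as in the paper. -/
noncomputable def sgn (x : ℝ) : ℝ := if x < 0 then -1 else 1

/-- ESBIII density. -/
noncomputable def esbiiiPdf (c k ε : ℝ) (x : ℝ) : ℝ :=
  (c * k / 2) * ((sgn x * x) / (1 + sgn x * ε)) ^ (-(c + 1)) *
    (1 + ((sgn x * x) / (1 + sgn x * ε)) ^ (-c)) ^ (-(k + 1))

/-- rth moment of the ESBIII distribution, for a natural number r < c. -/
theorem esbiii_moment (c k ε : ℝ) (hc : 0 < c) (hk : 0 < k)
    (hε : ε ∈ Set.Ioo (-1 : ℝ) 1) (r : ℕ) (hrc : (r : ℝ) < c) :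
    ∫ x : ℝ, x ^ r * esbiiiPdf c k ε x =
      (k / 2) *
        (Real.Gamma (1 - r / c) * Real.Gamma (r / c + k) /
          Real.Gamma ((1 - r / c) + (r / c + k))) *
        ((1 + ε) ^ (r + 1) + (-1 : ℝ) ^ r * (1 - ε) ^ (r + 1)) := by
  obtain ⟨hε1, hε2⟩ := hε
  have hp : (0:ℝ) < 1 + ε := by linarith
  have hm : (0:ℝ) < 1 - ε := by linarith
  set F : ℝ → ℝ := fun x => x ^ r * esbiiiPdf c k ε x with hF
  set G : ℝ := Real.Gamma (1 - (r:ℝ)/c) * Real.Gamma ((r:ℝ)/c + k) /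
    Real.Gamma ((1 - (r:ℝ)/c) + ((r:ℝ)/c + k)) with hG
  -- positive half
  have hEqPos : ∀ x ∈ Ioi (0:ℝ), F x = x ^ r * (c * k / 2 * (x/(1+ε)) ^ (-(c+1)) *
      (1 + (x/(1+ε)) ^ (-c)) ^ (-(k+1))) := by
    intro x hx
    have : sgn x = 1 := if_neg (not_lt.mpr (mem_Ioi.mp hx).le)
    simp only [hF, esbiiiPdf, this, one_mul]
  have hPosVal : ∫ x in Ioi (0:ℝ), F x = (1+ε) ^ (r+1) * (k/2) * G := by
    rw [setIntegral_congr_fun measurableSet_Ioi hEqPos]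
    exact half_eq hc hk hp hrc
  have hPosInt : IntegrableOn F (Ioi (0:ℝ)) :=
    (half_integrable hc hk hp hrc).congr_fun (fun x hx => (hEqPos x hx).symm)
      measurableSet_Ioi
  -- negative half
  have hEqNeg : ∀ t ∈ Ioi (0:ℝ), |(-1 : ℝ)| • F (-t)
      = (-1:ℝ)^r * (t ^ r * (c * k / 2 * (t/(1-ε)) ^ (-(c+1)) *
        (1 + (t/(1-ε)) ^ (-c)) ^ (-(k+1)))) := by
    intro t ht
    have ht' := mem_Ioi.mp ht
    have hs : sgn (-t) = -1 := if_pos (by linarith)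
    have h1 : sgn (-t) * (-t) = t := by rw [hs]; ring
    have h2 : 1 + sgn (-t) * ε = 1 - ε := by rw [hs]; ring
    simp only [hF, esbiiiPdf, h1, h2, abs_neg, abs_one, one_smul]
    rw [neg_pow]
    ring
  have hNegVal : ∫ x in Iio (0:ℝ), F x = (-1:ℝ)^r * ((1-ε) ^ (r+1) * (k/2) * G) := by
    rw [← neg_image,
      integral_image_eq_integral_abs_deriv_smul measurableSet_Ioi neg_deriv negg_inj,
      setIntegral_congr_fun measurableSet_Ioi hEqNeg,
      MeasureTheory.integral_const_mul, half_eq hc hk hm hrc]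
  have hNegInt : IntegrableOn F (Iio (0:ℝ)) := by
    have h := integrableOn_image_iff_integrableOn_abs_deriv_smul measurableSet_Ioi
      neg_deriv negg_inj F
    rw [neg_image] at h
    rw [h]
    exact IntegrableOn.congr_fun
      (Integrable.const_mul (half_integrable hc hk hm hrc) ((-1:ℝ)^r))
      (fun t ht => (hEqNeg t ht).symm) measurableSet_Ioi
  -- combine
  have hInt : Integrable F := by
    have h := hNegInt.union hPosInt
    rw [Iio_union_Ioi] at h
    rwa [IntegrableOn, MeasureTheory.restrict_compl_singleton] at h
  rw [← intervalIntegral.integral_Iic_add_Ioi (b := (0:ℝ)) hInt.integrableOn hInt.integrableOn,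
    integral_Iic_eq_integral_Iio, hNegVal, hPosVal]
  ring
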